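/- Let E be a complex Banach space, A a bounded linear operator on E, and r a real number with r > ‖A‖. Then (1/(2πi)) ∮_{|z|=r} (z·id_E − A)⁻¹ dz = id_E, where the contour integral is taken counterclockwise over the circle of radius r centered at 0 (for |z| = r > ‖A‖ the operator z·id_E − A is invertible). This expresses the completeness M(1) = 1 of the spectral distribution of a bounded operator. -/

import Mathlib

section Aux
variable {E : Type*} [NormedAddCommGroup E] [NormedSpace ℂ E] [CompleteSpace E]

lemma aux_unit (A : E →L[ℂ] E) (z : ℂ) (hz0 : z ≠ 0) (hw : ‖z⁻¹ • A‖ < 1) :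
    IsUnit (z • (1 : E →L[ℂ] E) - A) ∧
      Ring.inverse (z • (1 : E →L[ℂ] E) - A) = z⁻¹ • Ring.inverse (1 - z⁻¹ • A) := by
  have hfact : z • (1 : E →L[ℂ] E) - A = z • (1 - z⁻¹ • A) := by
    rw [smul_sub, smul_smul, mul_inv_cancel₀ hz0, one_smul]
  have hBu : IsUnit (1 - z⁻¹ • A) := by
    have := (Units.oneSub (z⁻¹ • A) hw).isUnit
    rwa [Units.val_oneSub] at this
  set B := Ring.inverse (1 - z⁻¹ • A) with hB
  have h1 : (z • (1 : E →L[ℂ] E) - A) * (z⁻¹ • B) = 1 := by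
    rw [hfact, smul_mul_smul_comm, mul_inv_cancel₀ hz0, one_smul,
      Ring.mul_inverse_cancel _ hBu]
  have h2 : (z⁻¹ • B) * (z • (1 : E →L[ℂ] E) - A) = 1 := by
    rw [hfact, smul_mul_smul_comm, inv_mul_cancel₀ hz0, one_smul,
      Ring.inverse_mul_cancel _ hBu]
  refine ⟨⟨⟨_, _, h1, h2⟩, rfl⟩, ?_⟩
  exact Ring.inverse_unit ⟨_, _, h1, h2⟩


end Aux


open MeasureTheory

/-- For a bounded operator `A` on a complex Banach space `E` and `r > ‖A‖`,
the operator `z • 1 - A` is invertible for `‖z‖ = r`, and the counterclockwise contour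
integral `(1/(2πi)) ∮_{|z|=r} (z•1 - A)⁻¹ dz = 1`, i.e. the spectral distribution of a
bounded operator is complete: `M(1) = 1`. -/
theorem spectral_distribution_complete_of_bounded
    (E : Type*) [NormedAddCommGroup E] [NormedSpace ℂ E] [CompleteSpace E]
    (A : E →L[ℂ] E) (r : ℝ) (hr : ‖A‖ < r) :
    (∀ z : ℂ, ‖z‖ = r → IsUnit (z • (1 : E →L[ℂ] E) - A)) ∧
    (2 * Real.pi * Complex.I)⁻¹ •
      (∫ θ in (0:ℝ)..(2 * Real.pi),
        (Complex.I * r * Complex.exp (Complex.I * θ)) •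
          Ring.inverse (((r : ℂ) * Complex.exp (Complex.I * θ)) • (1 : E →L[ℂ] E) - A)) =
      (1 : E →L[ℂ] E) := by
  have hr0 : (0:ℝ) < r := (norm_nonneg A).trans_lt hr
  -- basic facts for z on the circle
  have hzfacts : ∀ z : ℂ, ‖z‖ = r → z ≠ 0 ∧ ‖z⁻¹ • A‖ < 1 := by
    intro z hz
    have hz0 : z ≠ 0 := by
      intro h; rw [h, norm_zero] at hz; linarith
    refine ⟨hz0, ?_⟩
    rw [norm_smul (β := E →L[ℂ] E), norm_inv, hz]
    rw [← div_eq_inv_mul, div_lt_one hr0]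
    exact hr
  constructor
  · intro z hz
    exact (aux_unit A z (hzfacts z hz).1 (hzfacts z hz).2).1
  -- the circle point
  set π := Real.pi
  have hnorm : ∀ θ : ℝ, ‖(r : ℂ) * Complex.exp (Complex.I * θ)‖ = r := by
    intro θ
    rw [norm_mul, Complex.norm_exp]
    simp [abs_of_pos hr0]
  -- the terms of the series
  set F : ℕ → ℝ → (E →L[ℂ] E) := fun n θ =>
    (Complex.I * ((r:ℂ)⁻¹)^n * Complex.exp (-(Complex.I * n) * θ)) • A^n with hF
  -- pointwise HasSum
  have hsum : ∀ θ : ℝ, HasSum (fun n => F n θ)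
      ((Complex.I * r * Complex.exp (Complex.I * θ)) •
        Ring.inverse (((r : ℂ) * Complex.exp (Complex.I * θ)) • (1 : E →L[ℂ] E) - A)) := by
    intro θ
    set z : ℂ := (r:ℂ) * Complex.exp (Complex.I * θ) with hzdef
    obtain ⟨hz0, hw⟩ := hzfacts z (hnorm θ)
    rw [(aux_unit A z hz0 hw).2]
    have hgeom : HasSum (fun n : ℕ => (z⁻¹ • A)^n) (Ring.inverse (1 - z⁻¹ • A)) :=
      hasSum_geom_series_inverse _ hw
    have := hgeom.const_smul (Complex.I : ℂ)
    have heq : ∀ n : ℕ, Complex.I • (z⁻¹ • A)^n = F n θ := by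
      intro n
      rw [smul_pow, smul_smul, hF]
      congr 1
      have hzexp : z⁻¹ = (r:ℂ)⁻¹ * Complex.exp (-(Complex.I * θ)) := by
        rw [hzdef, mul_inv, Complex.exp_neg]
      rw [hzexp, mul_pow, ← Complex.exp_nat_mul]
      ring_nf
    have h2 : (Complex.I * r * Complex.exp (Complex.I * θ)) •
        (z⁻¹ • Ring.inverse (1 - z⁻¹ • A)) =
        Complex.I • Ring.inverse (1 - z⁻¹ • A) := by
      rw [smul_smul]
      congr 1
      rw [hzdef]
      field_simp
      ring_nf
      exact mul_inv_cancel₀ (Complex.ofReal_ne_zero.mpr hr0.ne')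
    rw [h2]
    exact this.congr_fun fun n => (heq n).symm
  -- norms of the scalar coefficients
  have hcnorm : ∀ (n : ℕ) (θ : ℝ),
      ‖(Complex.I * ((r:ℂ)⁻¹)^n * Complex.exp (-(Complex.I * n) * θ) : ℂ)‖ = r⁻¹ ^ n := by
    intro n θ
    rw [norm_mul, norm_mul, Complex.norm_exp]
    have : ((-(Complex.I * n) * θ : ℂ)).re = 0 := by simp
    rw [this, Real.exp_zero, mul_one, Complex.norm_I, one_mul, norm_pow]
    norm_num [abs_of_pos hr0]
  have hApow : ∀ n : ℕ, ‖A ^ n‖ ≤ ‖A‖ ^ n := by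
    intro n
    cases n with
    | zero => rw [pow_zero, pow_zero]; exact ContinuousLinearMap.norm_id_le (𝕜 := ℂ) (E := E)
    | succ m => exact norm_pow_le' A (Nat.succ_pos m)
  -- dominated convergence: swap sum and integral
  have hkey : HasSum (fun n => ∫ θ in (0:ℝ)..(2 * π), F n θ)
      (∫ θ in (0:ℝ)..(2 * π),
        (Complex.I * r * Complex.exp (Complex.I * θ)) •
          Ring.inverse (((r : ℂ) * Complex.exp (Complex.I * θ)) • (1 : E →L[ℂ] E) - A)) := by
    apply intervalIntegral.hasSum_integral_of_dominated_convergence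
      (bound := fun n _ => (‖A‖ * r⁻¹) ^ n)
    · intro n
      haveI : SecondCountableTopologyEither ℝ (E →L[ℂ] E) := ⟨Or.inl inferInstance⟩
      apply Continuous.aestronglyMeasurable
      fun_prop
    · intro n
      filter_upwards with θ _
      rw [norm_smul (β := E →L[ℂ] E), hcnorm n θ, mul_pow]
      rw [mul_comm (‖A‖^n)]
      exact mul_le_mul_of_nonneg_left (hApow n) (by positivity)
    · filter_upwards with θ _
      apply summable_geometric_of_lt_one (by positivity)
      rw [← div_eq_mul_inv, div_lt_one hr0]; exact hr
    · exact intervalIntegrable_const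
    · filter_upwards with θ _
      exact hsum θ
  -- each term with n ≠ 0 integrates to zero
  have hzero : ∀ n : ℕ, n ≠ 0 → (∫ θ in (0:ℝ)..(2 * π), F n θ) = 0 := by
    intro n hn
    rw [hF]
    simp only
    rw [intervalIntegral.integral_smul_const]
    have : (∫ θ in (0:ℝ)..(2 * π),
        Complex.I * ((r:ℂ)⁻¹)^n * Complex.exp (-(Complex.I * n) * θ)) = 0 := by
      rw [intervalIntegral.integral_const_mul]
      have hc : (-(Complex.I * n) : ℂ) ≠ 0 :=
        neg_ne_zero.mpr (mul_ne_zero Complex.I_ne_zero (Nat.cast_ne_zero.mpr hn))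
      rw [integral_exp_mul_complex hc]
      have e2 : Complex.exp (-(Complex.I * n) * (2 * π : ℝ)) = 1 := by
        rw [show (-(Complex.I * n) : ℂ) * (2 * π : ℝ)
            = ((-(n:ℤ) : ℤ) : ℂ) * (2 * (Real.pi:ℂ) * Complex.I) by push_cast; ring,
          Complex.exp_int_mul_two_pi_mul_I]
      rw [e2]
      simp
    rw [this, zero_smul]
  have h0 : (∫ θ in (0:ℝ)..(2 * π), F 0 θ) = (2 * π * Complex.I) • (1 : E →L[ℂ] E) := by
    rw [hF]
    simp only [pow_zero, Nat.cast_zero, mul_zero, neg_zero, zero_mul, Complex.exp_zero,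
      mul_one]
    rw [intervalIntegral.integral_smul_const, intervalIntegral.integral_const]
    norm_num
  have htsum := hkey.tsum_eq
  rw [tsum_eq_single 0 (fun n hn => hzero n hn)] at htsum
  have h2pin : (2 * (π:ℂ) * Complex.I) ≠ 0 :=
    mul_ne_zero (mul_ne_zero two_ne_zero (Complex.ofReal_ne_zero.mpr Real.pi_ne_zero))
      Complex.I_ne_zero
  rw [← htsum, h0, smul_smul, inv_mul_cancel₀ h2pin, one_smul]
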